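/- arXiv:1702.01321 — 6 statements merged into one kernel-verified Lean document; each statement's English description precedes it below -/
import Mathlib

section
/- Let F be a field, let n ≥ 1, let x ∈ F with x ≠ 1 and x ≠ -1, let y ∈ F, and set z = y·x/(x² - 1). Then the n×n Zhang–Liu matrix satisfies the factorization Q(y,x) = P₁(z) · D(x²) · P₁(-z). -/
open Matrix Finset

/-- Generalized Pascal matrix of the first kind: with 1-based indexing the (i,j) entry is
`y^(j-i) * binom(j-1, i-1)` for `j ≥ i` and `0` otherwise. Here indices are 0-based. -/
def pascal1 {R : Type*} [CommRing R] (n : ℕ) (y : R) : Matrix (Fin n) (Fin n) R :=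
  Matrix.of fun i j => if i ≤ j then y ^ (j.val - i.val) * (Nat.choose j.val i.val : R) else 0

/-- Zhang–Liu matrix: with 1-based indexing the (i,j) entry is
`y^(j-i) * x^(i+j-2) * binom(j-1, i-1)` for `j ≥ i` and `0` otherwise. Indices 0-based here. -/
def zhangLiu {R : Type*} [CommRing R] (n : ℕ) (y x : R) : Matrix (Fin n) (Fin n) R :=
  Matrix.of fun i j =>
    if i ≤ j then y ^ (j.val - i.val) * x ^ (i.val + j.val) * (Nat.choose j.val i.val : R) else 0

/-- `D(α)` : the diagonal matrix with (i,i) entry `α^(i-1)` (1-based), i.e. `α^i` 0-based. -/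
def diagD {R : Type*} [CommRing R] (n : ℕ) (α : R) : Matrix (Fin n) (Fin n) R :=
  Matrix.diagonal fun i : Fin n => α ^ i.val

theorem zhangLiu_factorization {F : Type*} [Field F] (n : ℕ) (hn : 1 ≤ n)
    (x y : F) (hx1 : x ≠ 1) (hx2 : x ≠ -1) (z : F) (hz : z = y * x / (x ^ 2 - 1)) :
    zhangLiu n y x = pascal1 n z * diagD n (x ^ 2) * pascal1 n (-z) := by
  have h1 : x - 1 ≠ 0 := sub_ne_zero.2 hx1
  have h2 : x + 1 ≠ 0 := fun h => hx2 (by linear_combination h)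
  have hx : x ^ 2 - 1 ≠ 0 := fun h => (mul_ne_zero h1 h2) (by linear_combination h)
  have hz' : z * (x ^ 2 - 1) = y * x := by rw [hz]; field_simp
  ext i j
  rw [Matrix.mul_apply]
  simp only [diagD, pascal1, zhangLiu, Matrix.mul_diagonal, Matrix.of_apply, Fin.le_def]
  by_cases hij : i.val ≤ j.val
  · rw [if_pos hij]
    have key : ∀ k : Fin n,
        (if i.val ≤ k.val then z ^ (k.val - i.val) * (Nat.choose k.val i.val : F) else 0) *
            (x ^ 2) ^ k.val *
          (if k.val ≤ j.val then (-z) ^ (j.val - k.val) * (Nat.choose j.val k.val : F) else 0)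
        = (fun m : ℕ => (if i.val ≤ m then z ^ (m - i.val) * (Nat.choose m i.val : F) else 0) *
            (x ^ 2) ^ m *
          (if m ≤ j.val then (-z) ^ (j.val - m) * (Nat.choose j.val m : F) else 0)) k.val :=
      fun k => rfl
    rw [Finset.sum_congr rfl (fun k _ => key k),
      Fin.sum_univ_eq_sum_range (fun m : ℕ =>
        (if i.val ≤ m then z ^ (m - i.val) * (Nat.choose m i.val : F) else 0) *
          (x ^ 2) ^ m *
        (if m ≤ j.val then (-z) ^ (j.val - m) * (Nat.choose j.val m : F) else 0)) n]
    set f : ℕ → F := fun m =>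
      (if i.val ≤ m then z ^ (m - i.val) * (Nat.choose m i.val : F) else 0) *
        (x ^ 2) ^ m *
      (if m ≤ j.val then (-z) ^ (j.val - m) * (Nat.choose j.val m : F) else 0) with hf
    have hsub : Finset.Icc i.val j.val ⊆ Finset.range n := by
      intro m hm
      simp only [Finset.mem_Icc] at hm
      exact Finset.mem_range.2 (lt_of_le_of_lt hm.2 j.isLt)
    have hzero : ∀ m ∈ Finset.range n, m ∉ Finset.Icc i.val j.val → f m = 0 := by
      intro m _ hm
      simp only [Finset.mem_Icc, not_and_or, not_le] at hm
      rcases hm with hm | hm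
      · simp [hf, Nat.not_le.2 hm]
      · simp [hf, Nat.not_le.2 hm]
    rw [← Finset.sum_subset hsub hzero, ← Finset.Ico_add_one_right_eq_Icc, Finset.sum_Ico_eq_sum_range]
    set d := j.val - i.val with hd
    have hjd : j.val + 1 - i.val = d + 1 := by omega
    rw [hjd]
    have step : ∀ m ∈ Finset.range (d + 1),
        f (i.val + m) = ((Nat.choose j.val i.val : F) * ((x ^ 2) ^ i.val * z ^ d)) *
          ((x ^ 2) ^ m * (-1 : F) ^ (d - m) * (Nat.choose d m : F)) := by
      intro m hm
      have hmd : m ≤ d := Nat.lt_succ_iff.1 (Finset.mem_range.1 hm)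
      have him : i.val ≤ i.val + m := Nat.le_add_right _ _
      have hmj : i.val + m ≤ j.val := by omega
      have e1 : i.val + m - i.val = m := by omega
      have e2 : j.val - (i.val + m) = d - m := by omega
      have hchoose : (Nat.choose j.val (i.val + m) : F) * (Nat.choose (i.val + m) i.val : F)
          = (Nat.choose j.val i.val : F) * (Nat.choose d m : F) := by
        rw [← Nat.cast_mul, ← Nat.cast_mul, Nat.choose_mul him,
          show i.val + m - i.val = m by omega, hd]
      have hzpow : (-z) ^ (d - m) = (-1 : F) ^ (d - m) * z ^ (d - m) := by
        rw [neg_pow]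
      have hzz : z ^ m * z ^ (d - m) = z ^ d := by
        rw [← pow_add]; congr 1; omega
      simp only [hf, if_pos him, if_pos hmj, e1, e2]
      rw [hzpow]
      rw [pow_add (x ^ 2) i.val m]
      calc z ^ m * (Nat.choose (i.val + m) i.val : F) * ((x ^ 2) ^ i.val * (x ^ 2) ^ m) *
            ((-1 : F) ^ (d - m) * z ^ (d - m) * (Nat.choose j.val (i.val + m) : F))
          = (Nat.choose j.val (i.val + m) : F) * (Nat.choose (i.val + m) i.val : F) *
            ((x ^ 2) ^ i.val * (z ^ m * z ^ (d - m))) *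
            ((x ^ 2) ^ m * (-1 : F) ^ (d - m)) := by ring
        _ = _ := by rw [hchoose, hzz]; try ring
    rw [Finset.sum_congr rfl step, ← Finset.mul_sum]
    have hbinom : ∑ m ∈ Finset.range (d + 1),
        (x ^ 2) ^ m * (-1 : F) ^ (d - m) * (Nat.choose d m : F) = (x ^ 2 - 1) ^ d := by
      rw [show x ^ 2 - 1 = x ^ 2 + (-1 : F) by ring, add_pow]
    rw [hbinom]
    have hyx : z ^ d * (x ^ 2 - 1) ^ d = (y * x) ^ d := by
      rw [← mul_pow, hz']
    have hxij : x ^ (i.val + j.val) = (x ^ 2) ^ i.val * x ^ d := by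
      rw [← pow_mul, ← pow_add]; congr 1; omega
    symm
    calc (Nat.choose j.val i.val : F) * ((x ^ 2) ^ i.val * z ^ d) * (x ^ 2 - 1) ^ d
        = (Nat.choose j.val i.val : F) * ((x ^ 2) ^ i.val * (z ^ d * (x ^ 2 - 1) ^ d)) := by ring
      _ = (Nat.choose j.val i.val : F) * ((x ^ 2) ^ i.val * (y ^ d * x ^ d)) := by
          rw [hyx, mul_pow]
      _ = y ^ d * x ^ (i.val + j.val) * (Nat.choose j.val i.val : F) := by
          rw [hxij]; ring
  · rw [if_neg hij]
    refine (Finset.sum_eq_zero fun k _ => ?_).symm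
    by_cases hik : i.val ≤ k.val
    · rw [if_neg (by omega : ¬ k.val ≤ j.val), mul_zero]
    · rw [if_neg hik, zero_mul, zero_mul]
end

section
/- Let F be a field, let n ≥ 1, let x ∈ F with x ≠ 1 and x ≠ -1, let y ∈ F, and set z = y·x/(x² - 1). Then for every j with 1 ≤ j ≤ n, the j-th column of P₁(z) is an eigenvector of Q(y,x) with eigenvalue (x²)^{j-1}; that is, Q(y,x) applied to the j-th column of P₁(z) equals (x²)^{j-1} times that column. -/
open Matrix Finset

theorem key_sum {F : Type*} [CommRing F] (x y z : F) (i j : ℕ) (hij : i ≤ j)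
    (hz' : z + y * x = z * x ^ 2) :
    ∑ m ∈ Finset.range (j - i + 1),
      y ^ (i + m - i) * x ^ (i + (i + m)) * (Nat.choose (i + m) i : F) *
        (z ^ (j - (i + m)) * (Nat.choose j (i + m) : F))
      = (x ^ 2) ^ j * (z ^ (j - i) * (Nat.choose j i : F)) := by
  set r := j - i with hr
  have step : ∀ m ∈ Finset.range (r + 1),
      y ^ (i + m - i) * x ^ (i + (i + m)) * (Nat.choose (i + m) i : F) *
        (z ^ (j - (i + m)) * (Nat.choose j (i + m) : F))
      = x ^ (2 * i) * (Nat.choose j i : F) *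
          ((y * x) ^ m * z ^ (r - m) * (Nat.choose r m : F)) := by
    intro m hm
    have hm' : m ≤ r := by
      simpa using Nat.lt_succ_iff.mp (Finset.mem_range.mp hm)
    have hcm : (Nat.choose j (i + m) : F) * (Nat.choose (i + m) i : F)
        = (Nat.choose j i : F) * (Nat.choose r m : F) := by
      rw [← Nat.cast_mul, ← Nat.cast_mul, Nat.choose_mul (by omega)]
      congr 3 <;> omega
    have hx' : x ^ (i + (i + m)) = x ^ (2 * i) * x ^ m := by
      have h : i + (i + m) = 2 * i + m := by omega
      rw [h, pow_add]
    have hjk : j - (i + m) = r - m := by omega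
    have him : i + m - i = m := by omega
    rw [hjk, hx', him, mul_pow]
    linear_combination (x ^ (2 * i) * x ^ m * y ^ m * z ^ (r - m)) * hcm
  rw [Finset.sum_congr rfl step, ← Finset.mul_sum, ← add_pow]
  have h1 : y * x + z = z * x ^ 2 := by rw [add_comm]; exact hz'
  have hxp : x ^ (2 * i) * (x ^ 2) ^ r = (x ^ 2) ^ j := by
    have h : 2 * i + 2 * r = 2 * j := by omega
    rw [← pow_mul, ← pow_add, h, pow_mul]
  rw [h1, mul_pow]
  linear_combination (z ^ r * (Nat.choose j i : F)) * hxp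

theorem zhangLiu_eigenvectors {F : Type*} [Field F] (n : ℕ) (hn : 1 ≤ n)
    (x y : F) (hx1 : x ≠ 1) (hx2 : x ≠ -1) (z : F) (hz : z = y * x / (x ^ 2 - 1))
    (j : Fin n) :
    (zhangLiu n y x).mulVec (fun i => pascal1 n z i j) =
      (x ^ 2) ^ j.val • fun i => pascal1 n z i j := by
  have h1 : x - 1 ≠ 0 := sub_ne_zero.mpr hx1
  have h2 : x + 1 ≠ 0 := by
    intro h; exact hx2 (by linear_combination h)
  have hx : x ^ 2 - 1 ≠ 0 := by
    have hfac : x ^ 2 - 1 = (x - 1) * (x + 1) := by ring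
    rw [hfac]; exact mul_ne_zero h1 h2
  have hz' : z + y * x = z * x ^ 2 := by
    rw [hz]; field_simp; ring
  funext i
  simp only [mulVec, dotProduct, Pi.smul_apply, smul_eq_mul, zhangLiu, pascal1, Matrix.of_apply]
  by_cases hij : i ≤ j
  · rw [if_pos hij]
    set g : ℕ → F := fun k =>
      (if i.val ≤ k then y ^ (k - i.val) * x ^ (i.val + k) * (Nat.choose k i.val : F) else 0) *
      (if k ≤ j.val then z ^ (j.val - k) * (Nat.choose j.val k : F) else 0) with hg
    have hsum : (∑ k : Fin n,
        (if i ≤ k then y ^ (k.val - i.val) * x ^ (i.val + k.val) *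
            (Nat.choose k.val i.val : F) else 0) *
        (if k ≤ j then z ^ (j.val - k.val) * (Nat.choose j.val k.val : F) else 0))
        = ∑ k ∈ Finset.range n, g k := by
      rw [← Fin.sum_univ_eq_sum_range g n]
      exact Finset.sum_congr rfl fun k _ => rfl
    rw [hsum]
    have hgite : ∀ k ∈ Finset.range n, g k =
        if k ∈ Finset.Icc i.val j.val then
          y ^ (k - i.val) * x ^ (i.val + k) * (Nat.choose k i.val : F) *
            (z ^ (j.val - k) * (Nat.choose j.val k : F)) else 0 := by
      intro k _
      rw [hg]
      by_cases hik : i.val ≤ k <;> by_cases hkj : k ≤ j.val <;>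
        simp only [if_pos, if_neg, hik, hkj, Finset.mem_Icc, and_true, true_and,
          if_true, if_false, and_false, false_and, zero_mul, mul_zero, ite_true, ite_false]
    rw [Finset.sum_congr rfl hgite, Finset.sum_ite_mem]
    have hIcc : Finset.range n ∩ Finset.Icc i.val j.val = Finset.Icc i.val j.val := by
      apply Finset.inter_eq_right.mpr
      intro k hk
      simp only [Finset.mem_Icc] at hk
      exact Finset.mem_range.mpr (lt_of_le_of_lt hk.2 j.isLt)
    have hij' : i.val ≤ j.val := hij
    have hlen : j.val + 1 - i.val = j.val - i.val + 1 := by omega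
    rw [hIcc, ← Finset.Ico_add_one_right_eq_Icc, Finset.sum_Ico_eq_sum_range, hlen]
    exact key_sum x y z i.val j.val hij' hz'
  · rw [if_neg hij, mul_zero]
    apply Finset.sum_eq_zero
    intro k _
    by_cases hik : i ≤ k
    · have hkj : ¬ k ≤ j := fun h => hij (le_trans hik h)
      rw [if_neg hkj, mul_zero]
    · rw [if_neg hik, zero_mul]
end

section
/- Let R be a commutative ring with identity, let n ≥ 1, and let y ∈ R. Then P₁(y) is invertible with P₁(y)⁻¹ = P₁(-y); equivalently, P₁(y) · P₁(-y) = I and P₁(-y) · P₁(y) = I, where I is the n×n identity matrix. -/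
open Matrix Finset

lemma alt_sum_choose {R : Type*} [CommRing R] (d : ℕ) :
    ∑ m ∈ range (d + 1), (-1 : R) ^ m * (Nat.choose d m : R) = if d = 0 then 1 else 0 := by
  have := Int.alternating_sum_range_choose (n := d)
  have h := congrArg (fun z : ℤ => (z : R)) this
  push_cast at h
  simpa using h

lemma key {R : Type*} [CommRing R] (y : R) (i j : ℕ) (hij : i ≤ j) :
    ∑ k ∈ Icc i j, (y ^ (k - i) * (Nat.choose k i : R)) *
      ((-y) ^ (j - k) * (Nat.choose j k : R)) = if i = j then 1 else 0 := by
  have hsum : ∀ k ∈ Icc i j,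
      (y ^ (k - i) * (Nat.choose k i : R)) * ((-y) ^ (j - k) * (Nat.choose j k : R))
      = (y ^ (j - i) * (Nat.choose j i : R)) *
        ((-1 : R) ^ (j - i) * ((-1) ^ (k - i) * (Nat.choose (j - i) (k - i) : R))) := by
    intro k hk
    rw [mem_Icc] at hk
    obtain ⟨hik, hkj⟩ := hk
    have h1 : (Nat.choose j k * Nat.choose k i : ℕ) =
        Nat.choose j i * Nat.choose (j - i) (k - i) := Nat.choose_mul hik
    have h2 : (j - k) + (k - i) = j - i := by omega
    have h3 : (-1 : R) ^ (j - i) * (-1) ^ (k - i) = (-1) ^ (j - k) := by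
      have h4 : (-1 : R) ^ (k - i) * (-1) ^ (k - i) = 1 := by
        rw [← pow_add, ← two_mul, pow_mul]; norm_num
      rw [← h2, pow_add, mul_assoc, h4, mul_one]
    calc (y ^ (k - i) * (Nat.choose k i : R)) * ((-y) ^ (j - k) * (Nat.choose j k : R))
        = ((-1) ^ (j - k) * y ^ ((j-k)+(k-i))) * ((Nat.choose j k * Nat.choose k i : ℕ) : R) := by
          rw [neg_pow, pow_add]; push_cast; ring
      _ = _ := by rw [h1, h2, ← h3]; push_cast; ring
  rw [Finset.sum_congr rfl hsum, ← Finset.mul_sum, ← Finset.mul_sum]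
  have hre : ∑ k ∈ Icc i j, (-1 : R) ^ (k - i) * (Nat.choose (j - i) (k - i) : R)
      = ∑ m ∈ range (j - i + 1), (-1 : R) ^ m * (Nat.choose (j - i) m : R) := by
    refine Finset.sum_nbij' (fun k => k - i) (fun m => m + i) ?_ ?_ ?_ ?_ ?_ <;>
      intro a ha <;> simp only [mem_Icc, mem_range] at * <;> omega
  rw [hre, alt_sum_choose]
  by_cases h : i = j
  · subst h; simp
  · have : j - i ≠ 0 := by omega
    simp [h, this]

lemma pascal_mul {R : Type*} [CommRing R] (n : ℕ) (y : R) :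
    pascal1 n y * pascal1 n (-y) = 1 := by
  ext i j
  rw [Matrix.mul_apply]
  simp only [pascal1, Matrix.of_apply, Matrix.one_apply]
  set g : ℕ → R := fun k => if i.val ≤ k ∧ k ≤ j.val then
      (y ^ (k - i.val) * (Nat.choose k i.val : R)) *
      ((-y) ^ (j.val - k) * (Nat.choose j.val k : R)) else 0 with hg
  have hterm : ∀ k : Fin n,
      (if i ≤ k then y ^ (k.val - i.val) * (Nat.choose k.val i.val : R) else 0) *
      (if k ≤ j then (-y) ^ (j.val - k.val) * (Nat.choose j.val k.val : R) else 0)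
      = g k.val := by
    intro k
    simp only [hg, Fin.le_def]
    by_cases h1 : i.val ≤ k.val <;> by_cases h2 : k.val ≤ j.val <;> simp [h1, h2]
  rw [Finset.sum_congr rfl (fun k _ => hterm k), Fin.sum_univ_eq_sum_range (fun k => g k) n]
  by_cases hij : i.val ≤ j.val
  · have hsub : Icc i.val j.val ⊆ range n := by
      intro k hk
      rw [mem_Icc] at hk
      rw [mem_range]
      exact lt_of_le_of_lt hk.2 j.isLt
    rw [← Finset.sum_subset hsub (fun k _ hk => by
        rw [mem_Icc] at hk
        simp only [hg]
        rw [if_neg hk])]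
    have : ∑ k ∈ Icc i.val j.val, g k = ∑ k ∈ Icc i.val j.val,
        (y ^ (k - i.val) * (Nat.choose k i.val : R)) *
        ((-y) ^ (j.val - k) * (Nat.choose j.val k : R)) := by
      refine Finset.sum_congr rfl fun k hk => ?_
      rw [mem_Icc] at hk
      simp only [hg]
      rw [if_pos hk]
    rw [this, key y i.val j.val hij]
    congr 1
    simp [Fin.ext_iff]
  · have hij' : i ≠ j := fun h => hij (le_of_eq (congrArg Fin.val h))
    rw [if_neg hij']
    refine Finset.sum_eq_zero fun k _ => ?_
    simp only [hg]
    rw [if_neg (by omega)]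

theorem pascal1_inv {R : Type*} [CommRing R] (n : ℕ) (hn : 1 ≤ n) (y : R) :
    pascal1 n y * pascal1 n (-y) = 1 ∧ pascal1 n (-y) * pascal1 n y = 1 ∧
      IsUnit (pascal1 n y) ∧ (pascal1 n y)⁻¹ = pascal1 n (-y) := by
  have h1 := pascal_mul n y
  have h2 := pascal_mul n (-y)
  rw [neg_neg] at h2
  exact ⟨h1, h2, (Matrix.isUnit_iff_isUnit_det _).mpr (Matrix.isUnit_det_of_right_inverse h1), Matrix.inv_eq_right_inv h1⟩
end

section
/- Let R be a commutative ring with identity, let n ≥ 1, let y ∈ R, and let k be a natural number. Then P₁(y)^k = P₁(k·y), where k·y denotes the k-fold sum y + ⋯ + y in R. -/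
open Matrix Finset

lemma pascal1_key {R : Type*} [CommRing R] (y z : R) (i j : ℕ) (hij : i ≤ j) :
    ∑ l ∈ Finset.Icc i j, (y ^ (l - i) * (l.choose i : R)) * (z ^ (j - l) * (j.choose l : R))
      = (y + z) ^ (j - i) * (j.choose i : R) := by
  rw [← Finset.Ico_add_one_right_eq_Icc, Finset.sum_Ico_eq_sum_range]
  have hd : j + 1 - i = (j - i) + 1 := by omega
  rw [hd, add_pow, Finset.sum_mul]
  refine Finset.sum_congr rfl fun m hm => ?_
  have hm' : m ≤ j - i := by simpa [Nat.lt_succ_iff] using Finset.mem_range.mp hm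
  have h1 : i + m ≤ j := by omega
  have h2 : (j.choose (i + m) : ℕ) * ((i + m).choose i) = j.choose i * (j - i).choose m := by
    have := Nat.choose_mul (n := j) (k := i + m) (s := i) (Nat.le_add_right i m)
    simpa [Nat.add_sub_cancel_left] using this
  have h3 : ((j.choose (i + m) : R)) * ((i + m).choose i : R)
      = (j.choose i : R) * ((j - i).choose m : R) := by
    exact_mod_cast congrArg (Nat.cast : ℕ → R) h2
  have he1 : i + m - i = m := by omega
  have he2 : j - (i + m) = j - i - m := by omega
  rw [he1, he2]
  ring_nf
  calc y ^ m * (↑((m + i).choose i)) * z ^ (j - i - m) * (↑(j.choose (m+i)) : R)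
      = y ^ m * z ^ (j - i - m) * ((↑(j.choose (m+i)) : R) * ↑((m + i).choose i)) := by ring
    _ = y ^ m * z ^ (j - i - m) * ((j.choose i : R) * ((j - i).choose m : R)) := by
        rw [add_comm m i, h3]
    _ = y ^ m * z ^ (j - i - m) * ↑((j - i).choose m) * ↑(j.choose i) := by ring

lemma pascal1_mul {R : Type*} [CommRing R] (n : ℕ) (y z : R) :
    pascal1 n y * pascal1 n z = pascal1 n (y + z) := by
  ext i j
  simp only [mul_apply, pascal1, of_apply, Fin.le_def]
  by_cases h : i.val ≤ j.val
  · rw [if_pos h]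
    rw [Fin.sum_univ_eq_sum_range (fun l =>
      (if i.val ≤ l then y ^ (l - i.val) * (Nat.choose l i.val : R) else 0) *
      (if l ≤ j.val then z ^ (j.val - l) * (Nat.choose j.val l : R) else 0)) n]
    have hsub : Finset.Icc i.val j.val ⊆ Finset.range n := by
      intro l hl
      simp only [Finset.mem_Icc] at hl
      exact Finset.mem_range.mpr (lt_of_le_of_lt hl.2 j.isLt)
    rw [← Finset.sum_subset hsub (fun l _ hl => by
      simp only [Finset.mem_Icc, not_and_or, not_le] at hl
      rcases hl with hl | hl
      · rw [if_neg (show ¬ i.val ≤ l by omega), zero_mul]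
      · rw [if_neg (show ¬ l ≤ j.val by omega), mul_zero])]
    rw [Finset.sum_congr rfl (fun l hl => by
      simp only [Finset.mem_Icc] at hl
      rw [if_pos hl.1, if_pos hl.2])]
    exact pascal1_key y z i.val j.val h
  · rw [if_neg h]
    refine Finset.sum_eq_zero fun l _ => ?_
    by_cases h1 : i.val ≤ l.val
    · rw [if_neg (show ¬ l.val ≤ j.val by omega), mul_zero]
    · rw [if_neg h1, zero_mul]

lemma pascal1_zero {R : Type*} [CommRing R] (n : ℕ) : pascal1 n (0 : R) = 1 := by
  ext i j
  simp only [pascal1, of_apply, one_apply]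
  rcases lt_trichotomy i j with h | h | h
  · rw [if_pos h.le, if_neg h.ne]
    have : j.val - i.val ≠ 0 := by omega
    simp [zero_pow this]
  · simp [h]
  · rw [if_neg (not_le.mpr h), if_neg h.ne']

theorem pascal1_pow {R : Type*} [CommRing R] (n : ℕ) (hn : 1 ≤ n) (y : R) (k : ℕ) :
    pascal1 n y ^ k = pascal1 n (k • y) := by
  induction k with
  | zero => simp [pascal1_zero]
  | succ k ih => rw [pow_succ, ih, pascal1_mul, succ_nsmul]
end

section
/- Let F be a field, let n ≥ 2, let y ∈ F with y ≠ 0, and let x ∈ {1, -1} ⊆ F. Then the n×n Zhang–Liu matrix Q(y,x) is not diagonalizable over F: there is no invertible n×n matrix S over F such that S⁻¹ · Q(y,x) · S is diagonal. -/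
open Matrix Finset

lemma conj_pow_aux {n : ℕ} {F : Type*} [Field F] (S A : Matrix (Fin n) (Fin n) F)
    (h1 : S⁻¹ * S = 1) (h2 : S * S⁻¹ = 1) (k : ℕ) :
    (S⁻¹ * A * S) ^ k = S⁻¹ * A ^ k * S := by
  induction k with
  | zero => simp [h1]
  | succ k ih =>
      rw [pow_succ, ih, pow_succ]
      calc S⁻¹ * A ^ k * S * (S⁻¹ * A * S)
          = S⁻¹ * A ^ k * (S * S⁻¹) * A * S := by noncomm_ring
        _ = S⁻¹ * (A ^ k * A) * S := by rw [h2]; noncomm_ring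

theorem zhangLiu_not_diagonalizable {F : Type*} [Field F] (n : ℕ) (hn : 2 ≤ n)
    (y : F) (hy : y ≠ 0) (x : F) (hx : x = 1 ∨ x = -1) :
    ¬ ∃ S : Matrix (Fin n) (Fin n) F, IsUnit S ∧ (S⁻¹ * zhangLiu n y x * S).IsDiag := by
  rintro ⟨S, hS, hdiag⟩
  set Q := zhangLiu n y x with hQ
  have hx2 : x * x = 1 := by rcases hx with h | h <;> simp [h]
  have hxne : x ≠ 0 := by rcases hx with h | h <;> simp [h]
  -- Q is upper triangular with diagonal entries 1
  have htri : Q.BlockTriangular id := by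
    intro i j hij
    simp only [Q, zhangLiu, of_apply]
    rw [if_neg]
    exact fun h => absurd h (not_le.mpr hij)
  have hdiagQ : ∀ i : Fin n, Q i i = 1 := by
    intro i
    simp only [Q, zhangLiu, of_apply, if_pos le_rfl, Nat.sub_self, pow_zero, one_mul,
      Nat.choose_self, Nat.cast_one, mul_one, ← two_mul, pow_mul]
    rw [pow_two, hx2, one_pow]
  -- charpoly of Q is (X-1)^n
  have hcp : Q.charpoly = (Polynomial.X - 1) ^ n := by
    rw [Matrix.charpoly_of_upperTriangular Q htri]
    simp [hdiagQ]
  -- Cayley–Hamilton: (Q - 1)^n = 0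
  have hnil : (Q - 1) ^ n = 0 := by
    have := Q.aeval_self_charpoly
    rw [hcp] at this
    simpa using this
  -- transfer to D
  have hdet : IsUnit S.det := (Matrix.isUnit_iff_isUnit_det S).mp hS
  have h1 : S⁻¹ * S = 1 := Matrix.nonsing_inv_mul S hdet
  have h2 : S * S⁻¹ = 1 := Matrix.mul_nonsing_inv S hdet
  set D := S⁻¹ * Q * S with hD
  have hDnil : (D - 1) ^ n = 0 := by
    have hsub : D - 1 = S⁻¹ * (Q - 1) * S := by
      rw [Matrix.mul_sub, Matrix.sub_mul, Matrix.mul_one, h1]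
    rw [hsub, conj_pow_aux S (Q - 1) h1 h2, hnil, Matrix.mul_zero, Matrix.zero_mul]
  -- D is diagonal with all diagonal entries 1, so D = 1
  have hDdiag : Matrix.diagonal D.diag = D := hdiag.diagonal_diag
  have hD1 : D = 1 := by
    rw [← hDdiag]
    have : ∀ i, D.diag i = 1 := by
      intro i
      have : ((D - 1) ^ n) i i = 0 := by rw [hDnil]; rfl
      rw [← hDdiag] at this
      have hsub : Matrix.diagonal D.diag - 1 = Matrix.diagonal (D.diag - 1) := by
        rw [← Matrix.diagonal_one, Matrix.diagonal_sub]
        rfl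
      rw [hsub, Matrix.diagonal_pow, Matrix.diagonal_apply_eq] at this
      have h0 : (D.diag i - 1) ^ n = 0 := by
        simpa [Pi.pow_apply, Pi.sub_apply] using this
      have h0' : D.diag i - 1 = 0 :=
        pow_eq_zero_iff (n := n) (by omega) |>.mp h0
      exact sub_eq_zero.mp h0'
    have hd : D.diag = fun _ => 1 := funext this
    rw [hd]
    simp [Matrix.diagonal_one]
  -- conclude Q = 1 and contradiction
  have hQ1 : Q = 1 := by
    have : S * D * S⁻¹ = S * 1 * S⁻¹ := by rw [hD1]
    calc Q = S * S⁻¹ * Q * (S * S⁻¹) := by rw [h2]; noncomm_ring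
      _ = S * (S⁻¹ * Q * S) * S⁻¹ := by noncomm_ring
      _ = S * 1 * S⁻¹ := by rw [← hD, hD1]
      _ = 1 := by rw [Matrix.mul_one, h2]
  have hij : (⟨0, by omega⟩ : Fin n) ≠ ⟨1, by omega⟩ := by
    simp [Fin.ext_iff]
  have e1 : Q (⟨0, by omega⟩ : Fin n) (⟨1, by omega⟩ : Fin n) = y * x := by
    rw [hQ]
    simp only [zhangLiu, of_apply]
    rw [if_pos (show (⟨0, by omega⟩ : Fin n) ≤ ⟨1, by omega⟩ from by simp [Fin.le_def])]
    norm_num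
  have e2 : (1 : Matrix (Fin n) (Fin n) F) (⟨0, by omega⟩ : Fin n) (⟨1, by omega⟩ : Fin n) = 0 :=
    Matrix.one_apply_ne hij
  rw [hQ1, e2] at e1
  rcases mul_eq_zero.mp e1.symm with h | h
  · exact hy h
  · exact hxne h
end

section
/- Let F be a field of characteristic 0, let n ≥ 2, let y ∈ F with y ≠ 0, and let x ∈ {1, -1} ⊆ F. Then the n×n Zhang–Liu matrix Q(y,x) has infinite multiplicative order: Q(y,x)^k ≠ I for every integer k ≥ 1. -/
open Matrix Finset

theorem zhangLiu_infinite_order {F : Type*} [Field F] [CharZero F]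
    (n : ℕ) (hn : 2 ≤ n) (y : F) (hy : y ≠ 0) (x : F) (hx : x = 1 ∨ x = -1) :
    ∀ k : ℕ, 1 ≤ k → zhangLiu n y x ^ k ≠ 1 := by
  intro k hk h
  set Q := zhangLiu n y x with hQdef
  have hx2 : x ^ 2 = 1 := by rcases hx with rfl | rfl <;> ring
  have hxne : x ≠ 0 := by rcases hx with rfl | rfl <;> norm_num
  have h0 : (0 : ℕ) < n := by omega
  have h1 : (1 : ℕ) < n := by omega
  set i0 : Fin n := ⟨0, h0⟩ with hi0
  set i1 : Fin n := ⟨1, h1⟩ with hi1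
  have hne : i0 ≠ i1 := by simp [hi0, hi1, Fin.ext_iff]
  have hQ00 : Q i0 i0 = 1 := by
    rw [hQdef, zhangLiu, Matrix.of_apply, if_pos le_rfl]
    norm_num [hi0]
  have hQ01 : Q i0 i1 = x * y := by
    rw [hQdef, zhangLiu, Matrix.of_apply, if_pos (by simp [hi0, hi1, Fin.le_def])]
    norm_num [hi0, hi1]
    ring
  have hQ11 : Q i1 i1 = 1 := by
    rw [hQdef, zhangLiu, Matrix.of_apply, if_pos le_rfl]
    norm_num [hi1]
    exact hx
  have hQcol0 : ∀ j : Fin n, j ≠ i0 → Q j i0 = 0 := by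
    intro j hj
    have hv : j.val ≠ 0 := fun hv => hj (Fin.ext (by simp [hi0, hv]))
    have : ¬ j ≤ i0 := by
      intro hle
      exact hv (Nat.le_zero.mp (by simpa [Fin.le_def, hi0] using hle))
    rw [hQdef, zhangLiu, Matrix.of_apply, if_neg this]
  have hQcol1 : ∀ j : Fin n, j ≠ i0 → j ≠ i1 → Q j i1 = 0 := by
    intro j hj0 hj1
    have hv : ¬ j.val ≤ 1 := by
      intro hle
      interval_cases hv : j.val
      · exact hj0 (by simp [hi0, Fin.ext_iff, hv])
      · exact hj1 (by simp [hi1, Fin.ext_iff, hv])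
    have : ¬ j ≤ i1 := by simpa [Fin.le_def, hi1] using hv
    rw [hQdef, zhangLiu, Matrix.of_apply, if_neg this]
  have key : ∀ m : ℕ, (Q ^ m) i0 i0 = 1 ∧ (Q ^ m) i0 i1 = m * (x * y) := by
    intro m
    induction m with
    | zero => constructor <;> simp [Matrix.one_apply, hne]
    | succ m ih =>
      obtain ⟨ih0, ih1⟩ := ih
      rw [pow_succ]
      constructor
      · rw [Matrix.mul_apply]
        rw [Finset.sum_eq_single i0]
        · rw [ih0, hQ00, one_mul]
        · intro j _ hj; rw [hQcol0 j hj, mul_zero]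
        · intro habs; exact absurd (Finset.mem_univ i0) habs
      · rw [Matrix.mul_apply]
        have hsub : ({i0, i1} : Finset (Fin n)) ⊆ Finset.univ := Finset.subset_univ _
        rw [← Finset.sum_subset hsub (by
          intro j _ hj
          simp only [Finset.mem_insert, Finset.mem_singleton, not_or] at hj
          rw [hQcol1 j hj.1 hj.2, mul_zero])]
        rw [Finset.sum_pair hne, ih0, ih1, hQ01, hQ11]
        push_cast
        ring
  obtain ⟨-, hk1⟩ := key k
  rw [h] at hk1
  have : (0 : F) = k * (x * y) := by
    simpa [Matrix.one_apply, hne] using hk1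
  have hkne : (k : F) ≠ 0 := Nat.cast_ne_zero.mpr (by omega)
  exact (mul_ne_zero hkne (mul_ne_zero hxne hy)) this.symm
end
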